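/- arXiv:2004.05903 — 3 statements merged into one kernel-verified Lean document; each statement's English description precedes it below -/
import Mathlib

section
/- Let g be an invertible linear endomorphism of a finite-dimensional real vector space V with nondegenerate symmetric bilinear form o, and σ(g) := (g*)^{-1}. If there exist o-orthogonal bases of lines 𝒞 and 𝒞' of V with g·𝒞 = 𝒞' (as sets of lines, mapping each line to a line), then σ(g⁻¹)g is diagonalizable with real eigenvalues. -/
/-- if `g` maps an `o`-orthogonal basis of lines `𝒞` onto an `o`-orthogonal basis
of lines `𝒞'`, then `σ(g⁻¹)g` is diagonalizable with real eigenvalues. Here `gsi` is the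
`o`-adjoint of `g⁻¹`, so that `σ(g⁻¹) = gsi⁻¹`. -/
theorem stmt_7 (d : ℕ) (V : Type*) [AddCommGroup V] [Module ℝ V] [FiniteDimensional ℝ V]
    (hd : Module.finrank ℝ V = d)
    (B : LinearMap.BilinForm ℝ V) (hsymm : LinearMap.BilinForm.IsSymm B)
    (hnd : LinearMap.BilinForm.Nondegenerate B)
    (g gsi : V ≃ₗ[ℝ] V) (hadj : ∀ u v : V, B (g.symm u) v = B u (gsi v))
    (ℓ ℓ' : Fin d → Submodule ℝ V)
    (hrank : ∀ i, Module.finrank ℝ (ℓ i) = 1)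
    (hrank' : ∀ i, Module.finrank ℝ (ℓ' i) = 1)
    (horth : ∀ i j, i ≠ j → ∀ v ∈ ℓ i, ∀ w ∈ ℓ j, B v w = 0)
    (horth' : ∀ i j, i ≠ j → ∀ v ∈ ℓ' i, ∀ w ∈ ℓ' j, B v w = 0)
    (hspan : (⨆ i, ℓ i) = ⊤) (hspan' : (⨆ i, ℓ' i) = ⊤)
    (hmap : ∃ σp : Equiv.Perm (Fin d), ∀ i, Submodule.map g.toLinearMap (ℓ i) = ℓ' (σp i)) :
    ∃ b : Module.Basis (Fin d) ℝ V, ∀ i, ∃ μ : ℝ,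
      (gsi.symm.toLinearMap ∘ₗ g.toLinearMap) (b i) = μ • b i := by
  obtain ⟨σp, hmapσ⟩ := hmap
  -- choose spanning vectors for the lines
  have hpick : ∀ (m : Fin d → Submodule ℝ V), (∀ i, Module.finrank ℝ (m i) = 1) →
      ∃ v : Fin d → V, ∀ i, v i ∈ m i ∧ v i ≠ 0 ∧ m i = Submodule.span ℝ {v i} := by
    intro m hm
    have h : ∀ i, ∃ x : V, x ∈ m i ∧ x ≠ 0 ∧ m i = Submodule.span ℝ {x} := by
      intro i
      have h1 : m i ≠ ⊥ := by
        intro h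
        have := hm i
        rw [h] at this
        simp at this
      obtain ⟨x, hx, hx0⟩ := Submodule.exists_mem_ne_zero_of_ne_bot h1
      refine ⟨x, hx, hx0, ?_⟩
      have hle : Submodule.span ℝ {x} ≤ m i := by
        exact (Submodule.span_singleton_le_iff_mem x (m i)).mpr hx
      have hfr : Module.finrank ℝ (Submodule.span ℝ {x} : Submodule ℝ V) = 1 := finrank_span_singleton hx0
      exact (Submodule.eq_of_le_of_finrank_le hle (by rw [hm i, hfr])).symm
    choose v hv using h
    exact ⟨v, hv⟩
  obtain ⟨v, hv⟩ := hpick ℓ hrank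
  obtain ⟨w, hw⟩ := hpick ℓ' hrank'
  -- span of range w is everything
  have hspanw : Submodule.span ℝ (Set.range w) = ⊤ := by
    rw [Submodule.span_range_eq_iSup]
    rw [← hspan']
    exact iSup_congr fun i => ((hw i).2.2).symm
  have hspanv : Submodule.span ℝ (Set.range v) = ⊤ := by
    rw [Submodule.span_range_eq_iSup]
    rw [← hspan]
    exact iSup_congr fun i => ((hv i).2.2).symm
  -- B (w j) (w j) ≠ 0
  have hwB : ∀ j, B (w j) (w j) ≠ 0 := by
    intro j h
    apply (hw j).2.1
    apply hnd.1
    intro x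
    have hx : x ∈ Submodule.span ℝ (Set.range w) := by rw [hspanw]; trivial
    have hker : Submodule.span ℝ (Set.range w) ≤ LinearMap.ker (B (w j)) := by
      rw [Submodule.span_le]
      rintro _ ⟨m, rfl⟩
      by_cases hm : m = j
      · subst hm; exact h
      · exact horth' j m (Ne.symm hm) _ (hw j).1 _ (hw m).1
    exact hker hx
  -- decomposition lemma
  have hdecomp : ∀ (k : Fin d) (x : V), (∀ j, j ≠ k → B (w j) x = 0) →
      x ∈ Submodule.span ℝ {w k} := by
    intro k x hx
    have hx' : x ∈ Submodule.span ℝ (Set.range w) := by rw [hspanw]; trivial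
    rw [Submodule.mem_span_range_iff_exists_fun ℝ] at hx'
    obtain ⟨c, hc⟩ := hx'
    have hcj : ∀ j, j ≠ k → c j = 0 := by
      intro j hj
      have h0 := hx j hj
      rw [← hc] at h0
      rw [map_sum] at h0
      have hsum : ∀ m ∈ Finset.univ, m ≠ j → (B (w j)) (c m • w m) = 0 := by
        intro m _ hm
        rw [map_smul]
        rw [horth' j m (Ne.symm hm) _ (hw j).1 _ (hw m).1]
        simp
      rw [Finset.sum_eq_single j hsum (by simp)] at h0
      rw [map_smul] at h0
      have := hwB j
      simp only [smul_eq_mul] at h0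
      rcases mul_eq_zero.mp h0 with h | h
      · exact h
      · exact absurd h this
    have : x = c k • w k := by
      rw [← hc]
      rw [Finset.sum_eq_single k (fun m _ hm => by rw [hcj m hm, zero_smul]) (by simp)]
    rw [this]
    exact Submodule.smul_mem _ _ (Submodule.mem_span_singleton_self _)
  -- g (v i) ∈ ℓ' (σp i)
  have hgv : ∀ i, g (v i) ∈ ℓ' (σp i) := by
    intro i
    rw [← hmapσ i]
    exact ⟨v i, (hv i).1, rfl⟩
  -- gsi (v i) ∈ ℓ' (σp i)
  have hgsiv : ∀ i, gsi (v i) ∈ Submodule.span ℝ {w (σp i)} := by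
    intro i
    apply hdecomp
    intro j hj
    rw [← hadj]
    -- g.symm (w j) ∈ ℓ (σp.symm j)
    have hwj : w j ∈ Submodule.map g.toLinearMap (ℓ (σp.symm j)) := by
      rw [hmapσ]
      simp only [Equiv.apply_symm_apply]
      exact (hw j).1
    obtain ⟨u, hu, hgu⟩ := hwj
    have : g.symm (w j) = u := by
      rw [← hgu]; simp
    rw [this]
    apply horth (σp.symm j) i _ _ hu _ (hv i).1
    intro h
    apply hj
    rw [← h]
    simp
  -- gsi (v i) = c • w (σp i) with c ≠ 0
  have key : ∀ i, ∃ μ : ℝ, gsi.symm (g (v i)) = μ • v i := by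
    intro i
    obtain ⟨c, hc⟩ := Submodule.mem_span_singleton.mp (hgsiv i)
    have hc0 : c ≠ 0 := by
      intro h
      apply (hv i).2.1
      have : gsi (v i) = 0 := by rw [← hc, h, zero_smul]
      simpa using congrArg gsi.symm this
    have hgv' : g (v i) ∈ Submodule.span ℝ {w (σp i)} := by
      rw [← (hw (σp i)).2.2]; exact hgv i
    obtain ⟨a, ha⟩ := Submodule.mem_span_singleton.mp hgv'
    refine ⟨a * c⁻¹, ?_⟩
    have hw' : w (σp i) = c⁻¹ • gsi (v i) := by
      rw [← hc, smul_smul, inv_mul_cancel₀ hc0, one_smul]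
    rw [← ha, hw']
    rw [smul_smul, map_smul]
    simp [mul_smul]
  -- build the basis
  have hcard : Fintype.card (Fin d) = Module.finrank ℝ V := by simp [hd]
  have htop : ⊤ ≤ Submodule.span ℝ (Set.range v) := by rw [hspanv]
  let b := basisOfTopLeSpanOfCardEqFinrank v htop hcard
  refine ⟨b, fun i => ?_⟩
  obtain ⟨μ, hμ⟩ := key i
  refine ⟨μ, ?_⟩
  have hb : b i = v i := by
    simp [b, coe_basisOfTopLeSpanOfCardEqFinrank]
  rw [hb]
  simpa using hμ
end

section
/- Let o be a nondegenerate symmetric bilinear form of signature (p, q) on ℝ^d (p + q = d, p, q > 0) and let ξ, ξ' be two complete flags such that the restriction of o to ξ^j and to ξ'^j is nondegenerate for every j. Then there exists a linear isometry h of o with h·ξ = ξ' if and only if for every j = 1, …, d the signature of o restricted to ξ^j equals the signature of o restricted to ξ'^j. -/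
/-- A complete flag of a `d`-dimensional space. -/
def IsCompleteFlag (d : ℕ) {V : Type*} [AddCommGroup V] [Module ℝ V]
    (ξ : ℕ → Submodule ℝ V) : Prop :=
  (∀ j ≤ d, Module.finrank ℝ (ξ j) = j) ∧ ∀ j < d, ξ j ≤ ξ (j + 1)

/-- The positive index of `o` restricted to `W`: the maximal dimension of a subspace of `W`
on which `o` is positive definite. -/
noncomputable def posIndex {V : Type*} [AddCommGroup V] [Module ℝ V]
    (B : LinearMap.BilinForm ℝ V) (W : Submodule ℝ V) : ℕ :=
  sSup {n | ∃ U : Submodule ℝ V, U ≤ W ∧ Module.finrank ℝ U = n ∧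
    ∀ v ∈ U, v ≠ 0 → 0 < B v v}

/-- The negative index of `o` restricted to `W`. -/
noncomputable def negIndex {V : Type*} [AddCommGroup V] [Module ℝ V]
    (B : LinearMap.BilinForm ℝ V) (W : Submodule ℝ V) : ℕ :=
  sSup {n | ∃ U : Submodule ℝ V, U ≤ W ∧ Module.finrank ℝ U = n ∧
    ∀ v ∈ U, v ≠ 0 → B v v < 0}

open Module Submodule

section Aux

variable {V : Type*} [AddCommGroup V] [Module ℝ V]

lemma negIndex_eq_posIndex_neg (B : LinearMap.BilinForm ℝ V) (W : Submodule ℝ V) :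
    negIndex B W = posIndex (-B) W := by
  unfold negIndex posIndex
  congr 1
  ext n
  constructor <;> rintro ⟨U, h1, h2, h3⟩ <;> refine ⟨U, h1, h2, fun v hv hv0 => ?_⟩
  · have := h3 v hv hv0; simpa using this
  · have := h3 v hv hv0; simp only [LinearMap.neg_apply, neg_pos] at this; exact this

/-- On a span of orthogonal vectors with positive diagonal, B is positive definite. -/
lemma span_posdef {B : LinearMap.BilinForm ℝ V} {n : ℕ} {v : Fin n → V}
    (horth : ∀ i j, i ≠ j → B (v i) (v j) = 0)
    (s : Finset (Fin n)) (hs : ∀ i ∈ s, 0 < B (v i) (v i)) :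
    ∀ u ∈ span ℝ (v '' ↑s), u ≠ 0 → 0 < B u u := by
  intro u hu hu0
  set w : {x // x ∈ s} → V := fun i => v ↑i with hw
  have himg : v '' ↑s = Set.range w := by
    ext x
    simp [hw, Set.mem_image]
  rw [himg] at hu
  obtain ⟨c, hc⟩ := (mem_span_range_iff_exists_fun ℝ).mp hu
  have h2 : ∀ i : {x // x ∈ s}, B (w i) u = c i * B (w i) (w i) := by
    intro i
    conv_lhs => rw [← hc]
    rw [map_sum, Finset.sum_eq_single i]
    · rw [map_smul, smul_eq_mul]
    · intro j _ hj
      rw [map_smul, smul_eq_mul,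
        horth (↑i) (↑j) (fun h => hj (Subtype.ext h.symm)), mul_zero]
    · intro h; exact absurd (Finset.mem_univ i) h
  have hBu : B u u = ∑ i : {x // x ∈ s}, c i * (c i * B (w i) (w i)) := by
    nth_rewrite 1 [← hc]
    rw [map_sum, LinearMap.sum_apply]
    refine Finset.sum_congr rfl fun i _ => ?_
    rw [map_smul, LinearMap.smul_apply, smul_eq_mul, h2 i]
  rw [hBu]
  have hex : ∃ i : {x // x ∈ s}, c i ≠ 0 := by
    by_contra hall
    push_neg at hall
    exact hu0 (by rw [← hc]; simp [hall])
  obtain ⟨i, hi⟩ := hex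
  apply Finset.sum_pos'
  · intro j _
    rw [← mul_assoc]
    exact mul_nonneg (mul_self_nonneg _) (le_of_lt (hs j j.2))
  · refine ⟨i, Finset.mem_univ i, ?_⟩
    rw [← mul_assoc]
    exact mul_pos (mul_self_pos.mpr hi) (hs i i.2)

lemma finrank_span_image {n : ℕ} {v : Fin n → V} (hli : LinearIndependent ℝ v)
    (s : Finset (Fin n)) : Module.finrank ℝ (span ℝ (v '' ↑s)) = s.card := by
  have himg : v '' ↑s = Set.range (fun i : {x // x ∈ s} => v ↑i) := by
    ext x; simp [Set.mem_image]
  rw [himg, show (Set.range fun i : {x // x ∈ s} => v ↑i) = Set.range (v ∘ Subtype.val) from rfl,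
    finrank_span_eq_card (hli.comp _ Subtype.val_injective)]
  simp

lemma posIndex_span [FiniteDimensional ℝ V] {B : LinearMap.BilinForm ℝ V} {n : ℕ}
    {v : Fin n → V} (horth : ∀ i j, i ≠ j → B (v i) (v j) = 0)
    (hne : ∀ i, B (v i) (v i) ≠ 0) (s : Finset (Fin n)) :
    posIndex B (span ℝ (v '' ↑s)) = (s.filter fun i => 0 < B (v i) (v i)).card := by
  classical
  have hli : LinearIndependent ℝ v :=
    LinearMap.BilinForm.linearIndependent_of_iIsOrtho
      (LinearMap.BilinForm.iIsOrtho_def.mpr horth) hne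
  set W := span ℝ (v '' ↑s) with hW
  set P := s.filter fun i => 0 < B (v i) (v i) with hP
  set Q := s.filter fun i => ¬ 0 < B (v i) (v i) with hQ
  have hPQ : P.card + Q.card = s.card := Finset.card_filter_add_card_filter_not _
  set N := span ℝ (v '' ↑Q) with hN
  have hNneg : ∀ u ∈ N, u ≠ 0 → B u u < 0 := by
    intro u hu hu0
    have : (0:ℝ) < (-B) u u := by
      refine span_posdef (B := -B) (fun i j hij => by simp [horth i j hij]) Q
        (fun i hi => ?_) u hu hu0
      have h1 := (Finset.mem_filter.mp hi).2
      have h2 := hne i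
      simp only [LinearMap.neg_apply]
      cases lt_or_gt_of_ne h2 with
      | inl h => linarith
      | inr h => exact absurd h h1
    simpa using this
  have hub : ∀ m ∈ {n | ∃ U : Submodule ℝ V, U ≤ W ∧ Module.finrank ℝ U = n ∧
      ∀ x ∈ U, x ≠ 0 → 0 < B x x}, m ≤ P.card := by
    rintro m ⟨U, hUW, hrank, hpos⟩
    have hdisj : U ⊓ N = ⊥ := by
      rw [eq_bot_iff]
      intro x hx
      rcases mem_inf.mp hx with ⟨hx1, hx2⟩
      by_contra hx0
      have hxne : x ≠ 0 := fun h => hx0 (by simp [h])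
      exact absurd (hpos x hx1 hxne) (not_lt.mpr (le_of_lt (hNneg x hx2 hxne)))
    have hNW : N ≤ W := span_mono (Set.image_mono
      (by intro i hi; exact Finset.mem_coe.mpr (Finset.mem_filter.mp hi).1))
    have h1 : finrank ℝ (U ⊔ N : Submodule ℝ V) + finrank ℝ (U ⊓ N : Submodule ℝ V)
        = finrank ℝ U + finrank ℝ N := Submodule.finrank_sup_add_finrank_inf_eq U N
    rw [hdisj, finrank_bot, add_zero, hrank, finrank_span_image hli] at h1
    have h2 : finrank ℝ (U ⊔ N : Submodule ℝ V) ≤ finrank ℝ W :=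
      Submodule.finrank_mono (sup_le hUW hNW)
    rw [finrank_span_image hli] at h2
    omega
  have hmem : P.card ∈ {n | ∃ U : Submodule ℝ V, U ≤ W ∧ Module.finrank ℝ U = n ∧
      ∀ x ∈ U, x ≠ 0 → 0 < B x x} := by
    refine ⟨span ℝ (v '' ↑P), span_mono (Set.image_mono (by
      intro i hi; exact Finset.mem_coe.mpr (Finset.mem_filter.mp hi).1)),
      finrank_span_image hli P, ?_⟩
    exact span_posdef horth P (fun i hi => (Finset.mem_filter.mp hi).2)
  exact le_antisymm (csSup_le ⟨P.card, hmem⟩ hub) (le_csSup ⟨P.card, hub⟩ hmem)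

lemma posIndex_map [FiniteDimensional ℝ V] {B : LinearMap.BilinForm ℝ V} (h : V ≃ₗ[ℝ] V)
    (hB : ∀ u w, B (h u) (h w) = B u w) (W : Submodule ℝ V) :
    posIndex B (W.map h.toLinearMap) = posIndex B W := by
  have key : ∀ (g : V ≃ₗ[ℝ] V), (∀ u w, B (g u) (g w) = B u w) → ∀ (W : Submodule ℝ V),
      {n | ∃ U : Submodule ℝ V, U ≤ W ∧ Module.finrank ℝ U = n ∧
        ∀ x ∈ U, x ≠ 0 → 0 < B x x} ⊆
      {n | ∃ U : Submodule ℝ V, U ≤ W.map g.toLinearMap ∧ Module.finrank ℝ U = n ∧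
        ∀ x ∈ U, x ≠ 0 → 0 < B x x} := by
    rintro g hg W m ⟨U, hUW, hrank, hpos⟩
    refine ⟨U.map g.toLinearMap, Submodule.map_mono hUW, ?_, ?_⟩
    · rw [LinearEquiv.finrank_map_eq]; exact hrank
    · rintro x ⟨u, hu, rfl⟩ hx0
      have hu0 : u ≠ 0 := fun hh => hx0 (by simp [hh])
      have := hpos u hu hu0
      rw [← hg u u] at this
      exact this
  unfold posIndex
  apply le_antisymm
  · apply csSup_le
    · exact ⟨0, ⊥, bot_le, finrank_bot ℝ V, fun x hx hx0 => absurd (mem_bot ℝ |>.mp hx) hx0⟩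
    · intro m hm
      have hsymmB : ∀ u w, B (h.symm u) (h.symm w) = B u w := by
        intro u w
        conv_rhs => rw [← h.apply_symm_apply u, ← h.apply_symm_apply w, hB]
      have := key h.symm hsymmB (W.map h.toLinearMap) hm
      have heq : (W.map h.toLinearMap).map h.symm.toLinearMap = W := by
        rw [← Submodule.map_comp]
        simp
      rw [heq] at this
      refine le_csSup ⟨finrank ℝ V, ?_⟩ this
      rintro m ⟨U, hUW, hrank, -⟩
      exact hrank ▸ finrank_le U
  · apply csSup_le
    · exact ⟨0, ⊥, bot_le, finrank_bot ℝ V, fun x hx hx0 => absurd (mem_bot ℝ |>.mp hx) hx0⟩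
    · intro m hm
      refine le_csSup ⟨finrank ℝ V, ?_⟩ (key h hB W hm)
      rintro m ⟨U, hUW, hrank, -⟩
      exact hrank ▸ finrank_le U

lemma flag_mono {d : ℕ} {ξ : ℕ → Submodule ℝ V} (hflag : IsCompleteFlag d ξ) :
    ∀ i j, i ≤ j → j ≤ d → ξ i ≤ ξ j := by
  intro i j hij hjd
  induction j, hij using Nat.le_induction with
  | base => exact le_rfl
  | succ k hk ih => exact (ih (by omega)).trans (hflag.2 k (by omega))

lemma exists_adapted [FiniteDimensional ℝ V] {d : ℕ} (hd : finrank ℝ V = d)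
    (B : LinearMap.BilinForm ℝ V) (hsymm : B.IsSymm)
    (ξ : ℕ → Submodule ℝ V) (hflag : IsCompleteFlag d ξ)
    (hndj : ∀ j, 1 ≤ j → j ≤ d → (B.restrict (ξ j)).Nondegenerate) :
    ∃ v : Fin d → V, (∀ i j, i ≠ j → B (v i) (v j) = 0) ∧
      (∀ i, B (v i) (v i) = 1 ∨ B (v i) (v i) = -1) ∧
      ∀ j ≤ d, ξ j = span ℝ (v '' {i | (i : ℕ) < j}) := by
  have hrefl : B.IsRefl := hsymm.isRefl
  have h0 : ξ 0 = ⊥ := by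
    have := hflag.1 0 (Nat.zero_le d)
    exact Submodule.finrank_eq_zero.mp this
  have horthbot : B.orthogonal (⊥ : Submodule ℝ V) = ⊤ := by
    rw [eq_top_iff]
    intro x _
    intro n hn
    rw [mem_bot ℝ |>.mp hn]
    simp [LinearMap.BilinForm.IsOrtho]
  have hcompl : ∀ j ≤ d, IsCompl (ξ j) (B.orthogonal (ξ j)) := by
    intro j hj
    rcases Nat.eq_zero_or_pos j with rfl | hj1
    · rw [h0, horthbot]; exact isCompl_bot_top
    · exact LinearMap.BilinForm.isCompl_orthogonal_of_restrict_nondegenerate hrefl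
        (hndj j hj1 hj)
  have key : ∀ j, j < d → ∃ w : V,
      (B w w = 1 ∨ B w w = -1) ∧ ξ (j+1) = ξ j ⊔ span ℝ {w} ∧
      w ∈ B.orthogonal (ξ j) ∧ w ∈ ξ (j+1) := by
    intro j hj
    have hc := hcompl j (le_of_lt hj)
    set O := B.orthogonal (ξ j) with hO
    have hrO : finrank ℝ (ξ j) + finrank ℝ O = d :=
      hd ▸ Submodule.finrank_add_eq_of_isCompl hc
    have hrξ : finrank ℝ (ξ j) = j := hflag.1 j (le_of_lt hj)
    have hrξ1 : finrank ℝ (ξ (j+1)) = j + 1 := hflag.1 (j+1) hj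
    set K := ξ (j+1) ⊓ O with hK
    have hsuptop : ξ (j+1) ⊔ O = ⊤ := by
      rw [eq_top_iff, ← hc.sup_eq_top]
      exact sup_le_sup_right (hflag.2 j hj) O
    have hrK : finrank ℝ K = 1 := by
      have := Submodule.finrank_sup_add_finrank_inf_eq (ξ (j+1)) O
      rw [hsuptop, finrank_top, hd, hrξ1, ← hK] at this
      omega
    have hKne : K ≠ ⊥ := by
      intro hh
      rw [hh, finrank_bot] at hrK
      omega
    obtain ⟨b, hbK, hb0⟩ := Submodule.ne_bot_iff K |>.mp hKne
    have hnotin : ∀ w ∈ K, w ≠ 0 → w ∉ ξ j := by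
      intro w hwK hw0 hwj
      have : w ∈ ξ j ⊓ O := mem_inf.mpr ⟨hwj, (mem_inf.mp hwK).2⟩
      rw [hc.inf_eq_bot, mem_bot] at this
      exact hw0 this
    have hsup : ∀ w ∈ K, w ≠ 0 → ξ (j+1) = ξ j ⊔ span ℝ {w} := by
      intro w hwK hw0
      have hwj1 : w ∈ ξ (j+1) := (mem_inf.mp hwK).1
      have hle : ξ j ⊔ span ℝ {w} ≤ ξ (j+1) :=
        sup_le (hflag.2 j hj) ((span_singleton_le_iff_mem w _).mpr hwj1)
      have hinf : ξ j ⊓ span ℝ {w} = ⊥ := by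
        rw [eq_bot_iff]
        intro x hx
        rcases mem_inf.mp hx with ⟨hx1, hx2⟩
        obtain ⟨c, rfl⟩ := mem_span_singleton.mp hx2
        rcases eq_or_ne c 0 with rfl | hc0
        · simp
        · exact absurd ((Submodule.smul_mem_iff _ hc0).mp hx1) (hnotin w hwK hw0)
      have hr : finrank ℝ (ξ j ⊔ span ℝ {w} : Submodule ℝ V) = j + 1 := by
        have := Submodule.finrank_sup_add_finrank_inf_eq (ξ j) (span ℝ {w})
        rw [hinf, finrank_bot, add_zero, hrξ, finrank_span_singleton hw0] at this
        omega
      exact (Submodule.eq_of_le_of_finrank_le hle (by rw [hrξ1, hr])).symm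
    have hBbb : B b b ≠ 0 := by
      intro hbb
      have hsupb := hsup b hbK hb0
      have hbO : b ∈ O := (mem_inf.mp hbK).2
      have hrad : ∀ y ∈ ξ (j+1), B b y = 0 := by
        intro y hy
        rw [hsupb] at hy
        obtain ⟨y1, hy1, y2, hy2, rfl⟩ := mem_sup.mp hy
        obtain ⟨c, rfl⟩ := mem_span_singleton.mp hy2
        rw [map_add, map_smul]
        have e1 : B b y1 = 0 := hrefl y1 b (hbO y1 hy1)
        rw [e1, hbb]
        simp
      have hb1 : b ∈ ξ (j+1) := (mem_inf.mp hbK).1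
      have := (hndj (j+1) (by omega) hj).1 ⟨b, hb1⟩ (fun n => hrad n n.2)
      exact hb0 (Subtype.ext_iff.mp this)
    set t := B b b with ht
    set a := (Real.sqrt |t|)⁻¹ with ha
    have hta : 0 < |t| := abs_pos.mpr hBbb
    have ha0 : a ≠ 0 := by
      rw [ha]
      exact inv_ne_zero (ne_of_gt (Real.sqrt_pos.mpr hta))
    set w := a • b with hw
    have hw0 : w ≠ 0 := smul_ne_zero ha0 hb0
    have hwK : w ∈ K := Submodule.smul_mem _ _ hbK
    have haa : a * a = |t|⁻¹ := by
      rw [ha, ← mul_inv, Real.mul_self_sqrt hta.le]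
    have hBww : B w w = t / |t| := by
      have e1 : B w w = a * (a * t) := by
        simp only [hw, map_smul, LinearMap.smul_apply, smul_eq_mul, ← ht]
      rw [e1, ← mul_assoc, haa, div_eq_mul_inv, mul_comm]
    refine ⟨w, ?_, hsup w hwK hw0, (mem_inf.mp hwK).2, (mem_inf.mp hwK).1⟩
    rcases lt_or_gt_of_ne hBbb with hneg | hpos
    · right; rw [hBww, abs_of_neg hneg]; field_simp
    · left; rw [hBww, abs_of_pos hpos]; field_simp
  choose w hw1 hw2 hw3 hw4 using fun (i : Fin d) => key i i.2
  refine ⟨w, ?_, fun i => hw1 i, ?_⟩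
  · have main : ∀ i j : Fin d, (i : ℕ) < (j : ℕ) → B (w i) (w j) = 0 := by
      intro i j hij
      have hwi : w i ∈ ξ j := (flag_mono hflag (↑i + 1) j (by omega) j.2.le) (hw4 i)
      exact hw3 j (w i) hwi
    intro i j hij
    rcases lt_or_gt_of_ne (fun h : (i : ℕ) = (j : ℕ) => hij (Fin.ext h)) with h | h
    · exact main i j h
    · have := main j i h
      rw [← hsymm.eq (w i) (w j)] at this
      simpa using this
  · intro j hjd
    induction j with
    | zero =>
      rw [h0]
      have : {i : Fin d | (i : ℕ) < 0} = ∅ := by ext i; simp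
      rw [this]
      simp
    | succ k ih =>
      have hkd : k < d := hjd
      have hset : {i : Fin d | (i : ℕ) < k + 1} =
          insert ⟨k, hkd⟩ {i : Fin d | (i : ℕ) < k} := by
        ext i
        simp only [Set.mem_setOf_eq, Set.mem_insert_iff, Fin.ext_iff]
        omega
      rw [hset, Set.image_insert_eq, span_insert, ← ih (le_of_lt hkd), hw2 ⟨k, hkd⟩]
      rw [sup_comm]

lemma card_filter_succ {d : ℕ} (j : ℕ) (hj : j < d) (p : Fin d → Prop) [DecidablePred p] :
    ((Finset.univ.filter fun i : Fin d => (i : ℕ) < j + 1).filter p).card =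
    ((Finset.univ.filter fun i : Fin d => (i : ℕ) < j).filter p).card
      + (if p ⟨j, hj⟩ then 1 else 0) := by
  have h1 : (Finset.univ.filter fun i : Fin d => (i : ℕ) < j + 1) =
      insert ⟨j, hj⟩ (Finset.univ.filter fun i : Fin d => (i : ℕ) < j) := by
    ext i
    simp only [Finset.mem_filter, Finset.mem_univ, true_and, Finset.mem_insert, Fin.ext_iff]
    omega
  rw [h1, Finset.filter_insert]
  split
  · rw [Finset.card_insert_of_notMem (by simp)]
  · simp

end Aux

/-- two `o`-generic complete flags are in the same orbit of the isometry group of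
`o` iff the signatures of `o` restricted to the corresponding pieces agree. -/
theorem stmt_9 (d p q : ℕ) (hp : 0 < p) (hq : 0 < q) (hpq : p + q = d)
    (B : LinearMap.BilinForm ℝ (Fin d → ℝ)) (hsymm : LinearMap.BilinForm.IsSymm B)
    (hnd : LinearMap.BilinForm.Nondegenerate B)
    (hsigp : posIndex B ⊤ = p) (hsigq : negIndex B ⊤ = q)
    (ξ ξ' : ℕ → Submodule ℝ (Fin d → ℝ))
    (hflag : IsCompleteFlag d ξ) (hflag' : IsCompleteFlag d ξ')
    (hndj : ∀ j, 1 ≤ j → j ≤ d → (LinearMap.BilinForm.restrict B (ξ j)).Nondegenerate)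
    (hndj' : ∀ j, 1 ≤ j → j ≤ d → (LinearMap.BilinForm.restrict B (ξ' j)).Nondegenerate) :
    (∃ h : (Fin d → ℝ) ≃ₗ[ℝ] (Fin d → ℝ),
        (∀ u v, B (h u) (h v) = B u v) ∧
        ∀ j, 1 ≤ j → j ≤ d → Submodule.map h.toLinearMap (ξ j) = ξ' j) ↔
      ∀ j, 1 ≤ j → j ≤ d →
        posIndex B (ξ j) = posIndex B (ξ' j) ∧ negIndex B (ξ j) = negIndex B (ξ' j) := by
  classical
  have hd : finrank ℝ (Fin d → ℝ) = d := Module.finrank_fin_fun ℝ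
  constructor
  · rintro ⟨h, hB, hmap⟩ j h1 h2
    constructor
    · rw [← hmap j h1 h2, posIndex_map h hB]
    · rw [negIndex_eq_posIndex_neg, negIndex_eq_posIndex_neg, ← hmap j h1 h2,
        posIndex_map h (fun u w => by simp [hB u w])]
  · intro hsig
    obtain ⟨v, horth, hdiag, hspan⟩ := exists_adapted hd B hsymm ξ hflag hndj
    obtain ⟨v', horth', hdiag', hspan'⟩ := exists_adapted hd B hsymm ξ' hflag' hndj'
    have hne : ∀ i, B (v i) (v i) ≠ 0 := by
      intro i; rcases hdiag i with h | h <;> rw [h] <;> norm_num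
    have hne' : ∀ i, B (v' i) (v' i) ≠ 0 := by
      intro i; rcases hdiag' i with h | h <;> rw [h] <;> norm_num
    -- counting: posIndex of each flag piece counts positive diagonal entries
    have hsetfin : ∀ j : ℕ, {i : Fin d | (i : ℕ) < j} =
        ↑(Finset.univ.filter fun i : Fin d => (i : ℕ) < j) := by
      intro j; ext i; simp
    have hcount : ∀ j ≤ d, posIndex B (ξ j) =
        ((Finset.univ.filter fun i : Fin d => (i : ℕ) < j).filter
          fun i => 0 < B (v i) (v i)).card := by
      intro j hj
      rw [hspan j hj, hsetfin j, posIndex_span horth hne]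
    have hcount' : ∀ j ≤ d, posIndex B (ξ' j) =
        ((Finset.univ.filter fun i : Fin d => (i : ℕ) < j).filter
          fun i => 0 < B (v' i) (v' i)).card := by
      intro j hj
      rw [hspan' j hj, hsetfin j, posIndex_span horth' hne']
    have hNeq : ∀ j ≤ d, ((Finset.univ.filter fun i : Fin d => (i : ℕ) < j).filter
          fun i => 0 < B (v i) (v i)).card =
        ((Finset.univ.filter fun i : Fin d => (i : ℕ) < j).filter
          fun i => 0 < B (v' i) (v' i)).card := by
      intro j hj
      rcases Nat.eq_zero_or_pos j with rfl | hj1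
      · have : (Finset.univ.filter fun i : Fin d => (i : ℕ) < 0) = ∅ := by
          ext i; simp
        rw [this]
        simp
      · rw [← hcount j hj, ← hcount' j hj, (hsig j hj1 hj).1]
    -- matching diagonal signs
    have hsigeq : ∀ i : Fin d, B (v i) (v i) = B (v' i) (v' i) := by
      intro i
      have hi1 : (i : ℕ) + 1 ≤ d := i.2
      have e1 := card_filter_succ (i : ℕ) i.2 (fun k => 0 < B (v k) (v k))
      have e1' := card_filter_succ (i : ℕ) i.2 (fun k => 0 < B (v' k) (v' k))
      have e2 := hNeq ((i : ℕ) + 1) hi1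
      have e3 := hNeq (i : ℕ) (le_of_lt i.2)
      rw [e1, e1', e3] at e2
      have hite : (if 0 < B (v ⟨(i : ℕ), i.2⟩) (v ⟨(i : ℕ), i.2⟩) then 1 else 0) =
          (if 0 < B (v' ⟨(i : ℕ), i.2⟩) (v' ⟨(i : ℕ), i.2⟩) then 1 else 0) := by omega
      have hii : (⟨(i : ℕ), i.2⟩ : Fin d) = i := by simp
      rw [hii] at hite
      rcases hdiag i with h | h <;> rcases hdiag' i with h' | h' <;> rw [h, h'] <;>
        rw [h, h'] at hite <;> norm_num at hite
    -- build the isometry from the two orthonormal-like bases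
    have hli : LinearIndependent ℝ v :=
      LinearMap.BilinForm.linearIndependent_of_iIsOrtho
        (LinearMap.BilinForm.iIsOrtho_def.mpr horth) hne
    have hli' : LinearIndependent ℝ v' :=
      LinearMap.BilinForm.linearIndependent_of_iIsOrtho
        (LinearMap.BilinForm.iIsOrtho_def.mpr horth') hne'
    have hd0 : 0 < d := by omega
    haveI : Nonempty (Fin d) := ⟨⟨0, hd0⟩⟩
    have hcard : Fintype.card (Fin d) = finrank ℝ (Fin d → ℝ) := by
      rw [hd, Fintype.card_fin]
    set bv := basisOfLinearIndependentOfCardEqFinrank hli hcard with hbvdef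
    set bv' := basisOfLinearIndependentOfCardEqFinrank hli' hcard with hbvdef'
    have cb : ⇑bv = v := coe_basisOfLinearIndependentOfCardEqFinrank _ _
    have cb' : ⇑bv' = v' := coe_basisOfLinearIndependentOfCardEqFinrank _ _
    set h := bv.equiv bv' (Equiv.refl _) with hhdef
    have hbv : ∀ i, h (v i) = v' i := by
      intro i
      rw [← cb, ← cb', hhdef, Basis.equiv_apply]
      rfl
    have hcompl : B.compl₁₂ (h : (Fin d → ℝ) →ₗ[ℝ] (Fin d → ℝ))
        (h : (Fin d → ℝ) →ₗ[ℝ] (Fin d → ℝ)) = B := by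
      apply LinearMap.ext_basis bv bv
      intro i j
      rw [LinearMap.compl₁₂_apply]
      simp only [cb, LinearEquiv.coe_coe, hbv]
      rcases eq_or_ne i j with rfl | hij
      · exact (hsigeq i).symm
      · rw [horth' i j hij, horth i j hij]
    have hiso : ∀ u w, B (h u) (h w) = B u w := by
      intro u w
      conv_rhs => rw [← hcompl]
      rw [LinearMap.compl₁₂_apply]
      rfl
    refine ⟨h, hiso, fun j h1 h2 => ?_⟩
    rw [hspan j h2, hspan' j h2, Submodule.map_span]
    congr 1
    rw [← Set.image_comp]
    apply Set.image_congr
    intro i _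
    exact hbv i
end

section
/- Let (V, o) be as above and g an invertible linear map with o-adjoint g*. For non-isotropic lines ℓ, ℓ' with ⟨v, v'⟩_o ≠ 0 (v ∈ ℓ, v' ∈ ℓ' nonzero), define G(ℓ, ℓ') := (1/2) log |⟨v,v'⟩_o² / (⟨v,v⟩_o ⟨v',v'⟩_o)|. Suppose ℓ, ℓ', σ(g)·ℓ, g·ℓ' are all non-isotropic, where σ(g) = (g*)^{-1}. Then G(σ(g)·ℓ, g·ℓ') − G(ℓ, ℓ') = −(1/2) log |⟨σ(g)v, σ(g)v⟩_o / ⟨v,v⟩_o| − (1/2) log |⟨g v', g v'⟩_o / ⟨v',v'⟩_o|. -/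
lemma aux_log (a b c A C : ℝ) (ha : a ≠ 0) (hb : b ≠ 0) (hc : c ≠ 0)
    (hA : A ≠ 0) (hC : C ≠ 0) :
    (1 / 2) * Real.log |a ^ 2 / (A * C)| - (1 / 2) * Real.log |a ^ 2 / (b * c)| =
    -((1 / 2) * Real.log |A / b|) - (1 / 2) * Real.log |C / c| := by
  rw [abs_div, abs_div, abs_div, abs_div, abs_mul, abs_mul,
    Real.log_div (by positivity) (by positivity),
    Real.log_div (by positivity) (by positivity),
    Real.log_div (by positivity) (by positivity),
    Real.log_div (by positivity) (by positivity),
    Real.log_mul (by positivity) (by positivity),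
    Real.log_mul (by positivity) (by positivity)]
  ring

/-- with `σ(g) = (g*)⁻¹` and
`G(ℓ,ℓ') = (1/2) log |⟨v,v'⟩² / (⟨v,v⟩⟨v',v'⟩)|` computed on representative vectors, one has
`G(σ(g)·ℓ, g·ℓ') − G(ℓ,ℓ') = −(1/2) log |⟨σ(g)v,σ(g)v⟩/⟨v,v⟩| − (1/2) log |⟨gv',gv'⟩/⟨v',v'⟩|`. -/
theorem stmt_15 (V : Type*) [AddCommGroup V] [Module ℝ V] [FiniteDimensional ℝ V]
    (B : LinearMap.BilinForm ℝ V) (hsymm : LinearMap.BilinForm.IsSymm B)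
    (hnd : LinearMap.BilinForm.Nondegenerate B)
    (g gs : V ≃ₗ[ℝ] V) (hadj : ∀ u v : V, B (g u) v = B u (gs v))
    (ℓ ℓ' : Submodule ℝ V)
    (hℓ : Module.finrank ℝ ℓ = 1) (hℓ' : Module.finrank ℝ ℓ' = 1)
    (v v' : V) (hv : v ∈ ℓ) (hv' : v' ∈ ℓ') (hv0 : v ≠ 0) (hv'0 : v' ≠ 0)
    (h1 : B v v ≠ 0) (h2 : B v' v' ≠ 0)
    (h3 : B (gs.symm v) (gs.symm v) ≠ 0) (h4 : B (g v') (g v') ≠ 0)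
    (h5 : B v v' ≠ 0) :
    (1 / 2) * Real.log
        |B (gs.symm v) (g v') ^ 2 / (B (gs.symm v) (gs.symm v) * B (g v') (g v'))| -
      (1 / 2) * Real.log |B v v' ^ 2 / (B v v * B v' v')| =
    -((1 / 2) * Real.log |B (gs.symm v) (gs.symm v) / B v v|) -
      (1 / 2) * Real.log |B (g v') (g v') / B v' v'| := by
  have key : B (gs.symm v) (g v') = B v v' := by
    have h6 : B (gs.symm v) (g v') = B (g v') (gs.symm v) := by
      exact hsymm.eq _ _
    rw [h6, hadj, gs.apply_symm_apply, hsymm.eq]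
  rw [key]
  exact aux_log _ _ _ _ _ h5 h1 h2 h3 h4
end
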